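/- Let $K$ be a field, $n \geq 3$, and $I_1, \dots, I_n, V_1, \dots, V_n \in K$. Over $K(z)$, let $\mathcal{L} = L(z) - x E_n$ be the characteristic matrix of the periodic Jacobi matrix. Then $\det(\mathcal{L}_{1,n}) = 1 + (-1)^n (I_n V_n / z) \det({}^1\mathcal{L}_1)$, where $\mathcal{L}_{1,n}$ is obtained by deleting the first column and last row of $\mathcal{L}$, and ${}^1\mathcal{L}_1$ by deleting the first and last rows and columns. -/

import Mathlib

open Polynomial

/-- The `n × n` periodic Jacobi matrix over `K(z)` (here `z = RatFunc.X`), with diagonal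
`(I₁+Vₙ, I₂+V₁, …, Iₙ+Vₙ₋₁)`, superdiagonal all `1`, subdiagonal `(I₁V₁, …, Iₙ₋₁Vₙ₋₁)`,
entry `IₙVₙ/z` at position `(1, n)` and entry `z` at position `(n, 1)`. -/
noncomputable def pJac (K : Type*) [Field K] (n : ℕ) (I V : ℕ → K) :
    Matrix (Fin n) (Fin n) (RatFunc K) :=
  Matrix.of fun i j =>
    if (i : ℕ) = j then RatFunc.C (I ((i : ℕ) + 1) + V (if (i : ℕ) = 0 then n else (i : ℕ)))
    else if (i : ℕ) + 1 = j then 1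
    else if (j : ℕ) + 1 = i then RatFunc.C (I ((j : ℕ) + 1) * V ((j : ℕ) + 1))
    else if (i : ℕ) = 0 ∧ (j : ℕ) = n - 1 then RatFunc.C (I n * V n) / RatFunc.X
    else if (i : ℕ) = n - 1 ∧ (j : ℕ) = 0 then RatFunc.X
    else 0

/-- The characteristic matrix `𝓛 = L(z) − x Eₙ` over `K(z)[x]`. -/
noncomputable def charMat (K : Type*) [Field K] (n : ℕ) (I V : ℕ → K) :
    Matrix (Fin n) (Fin n) (Polynomial (RatFunc K)) :=
  (pJac K n I V).map (C : RatFunc K →+* Polynomial (RatFunc K)) -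
    (X : Polynomial (RatFunc K)) • 1

set_option maxHeartbeats 1000000 in
lemma charMat_apply {K : Type*} [Field K] (n : ℕ) (I V : ℕ → K) (i j : Fin n) :
    charMat K n I V i j = C (pJac K n I V i j) - if i = j then X else 0 := by
  simp [charMat, Matrix.one_apply, mul_ite]

private lemma aux16 {K : Type*} [Field K] (m : ℕ) (I V : ℕ → K) :
    ((charMat K (m+3) I V).submatrix
        (fun k : Fin (m+2) => (⟨(k : ℕ), by omega⟩ : Fin (m+3)))
        (fun k : Fin (m+2) => (⟨(k : ℕ) + 1, by omega⟩ : Fin (m+3)))).det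
      = 1 + (-1) ^ (m+3) * C (RatFunc.C (I (m+3) * V (m+3)) / RatFunc.X) *
          ((charMat K (m+3) I V).submatrix
            (fun k : Fin (m+1) => (⟨(k : ℕ) + 1, by omega⟩ : Fin (m+3)))
            (fun k : Fin (m+1) => (⟨(k : ℕ) + 1, by omega⟩ : Fin (m+3)))).det := by
  set A := ((charMat K (m+3) I V).submatrix
        (fun k : Fin (m+2) => (⟨(k : ℕ), by omega⟩ : Fin (m+3)))
        (fun k : Fin (m+2) => (⟨(k : ℕ) + 1, by omega⟩ : Fin (m+3)))) with hA
  have hA00 : A 0 0 = 1 := by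
    simp only [hA, Matrix.submatrix_apply, charMat_apply, pJac, Matrix.of_apply,
      Fin.mk.injEq, Fin.val_zero, show m+3-1 = m+2 from rfl, false_and, and_false, true_and, and_true, if_false]
    split_ifs <;> first | exact (‹False›).elim | exact (‹False ∧ _›).1.elim | (exfalso; omega) | simp
  have hA0mid : ∀ j : Fin (m+1), j ≠ Fin.last m → A 0 j.succ = 0 := by
    intro j hj
    have hj' : (j : ℕ) < m := by
      rcases Nat.lt_or_ge (j : ℕ) m with h | h
      · exact h
      · exact absurd (Fin.ext (by simp only [Fin.val_last]; have := j.isLt; omega)) hj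
    simp only [hA, Matrix.submatrix_apply, charMat_apply, pJac, Matrix.of_apply,
      Fin.mk.injEq, Fin.val_succ, Fin.val_zero, show m+3-1 = m+2 from rfl, false_and, and_false, true_and, and_true, if_false]
    split_ifs <;> first | exact (‹False›).elim | exact (‹False ∧ _›).1.elim | (exfalso; omega) | simp
  have hA0last : A 0 (Fin.last (m+1)) = C (RatFunc.C (I (m+3) * V (m+3)) / RatFunc.X) := by
    simp only [hA, Matrix.submatrix_apply, charMat_apply, pJac, Matrix.of_apply,
      Fin.mk.injEq, Fin.val_last, Fin.val_zero, show m+3-1 = m+2 from rfl, false_and, and_false, true_and, and_true, if_false]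
    split_ifs <;> first | exact (‹False›).elim | exact (‹False ∧ _›).1.elim | (exfalso; omega) | simp
  have hminor0 : (A.submatrix Fin.succ ((0 : Fin (m+2)).succAbove)).det = 1 := by
    rw [Fin.succAbove_zero,
      Matrix.det_of_lowerTriangular _ (by
        intro a b hab
        have hab' : (a : ℕ) < b := hab
        simp only [Matrix.submatrix_apply, hA, charMat_apply, pJac, Matrix.of_apply,
          Fin.mk.injEq, Fin.val_succ, show m+3-1 = m+2 from rfl, false_and, and_false, true_and, and_true, if_false]
        split_ifs <;> first | exact (‹False›).elim | exact (‹False ∧ _›).1.elim | (exfalso; omega) | simp)]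
    have hd : ∀ a : Fin (m+1), (A.submatrix Fin.succ Fin.succ) a a = 1 := by
      intro a
      simp only [Matrix.submatrix_apply, hA, charMat_apply, pJac, Matrix.of_apply,
        Fin.mk.injEq, Fin.val_succ, show m+3-1 = m+2 from rfl, false_and, and_false, true_and, and_true, if_false]
      split_ifs <;> first | exact (‹False›).elim | exact (‹False ∧ _›).1.elim | (exfalso; omega) | simp
    exact Finset.prod_eq_one fun a _ => hd a
  have hminorlast : A.submatrix Fin.succ ((Fin.last (m+1)).succAbove) =
      ((charMat K (m+3) I V).submatrix
            (fun k : Fin (m+1) => (⟨(k : ℕ) + 1, by omega⟩ : Fin (m+3)))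
            (fun k : Fin (m+1) => (⟨(k : ℕ) + 1, by omega⟩ : Fin (m+3)))) := by
    rw [Fin.succAbove_last]
    ext a b
    simp only [Matrix.submatrix_apply, hA]
    congr 1 <;> exact Fin.ext (by simp)
  rw [Matrix.det_succ_row_zero, Fin.sum_univ_succ,
    Finset.sum_eq_single (Fin.last m)
      (by intro j _ hj; rw [hA0mid j hj]; ring)
      (by intro h; exact absurd (Finset.mem_univ _) h)]
  rw [hA00, hminor0]
  have hsucc : (Fin.last m).succ = Fin.last (m+1) := rfl
  rw [hsucc, hA0last, hminorlast]
  simp only [Fin.val_zero, pow_zero, Fin.val_last, mul_one, one_mul]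
  rw [show ((-1 : Polynomial (RatFunc K)) ^ (m+3)) = (-1)^(m+1) by
    rw [pow_add, pow_add]; ring]

/-- Identity (2.16) of the paper:
`det 𝓛_{1,n} = 1 + (−1)ⁿ (IₙVₙ/z) det(¹𝓛₁)`, where `𝓛_{1,n}` deletes the first column
and the last row, and `¹𝓛₁` deletes the first and last rows and columns. -/
theorem stmt_16 {K : Type*} [Field K] (n : ℕ) (hn : 3 ≤ n) (I V : ℕ → K) :
    ((charMat K n I V).submatrix
        (fun k : Fin (n - 1) => (⟨(k : ℕ), by have := k.isLt; omega⟩ : Fin n))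
        (fun k : Fin (n - 1) => (⟨(k : ℕ) + 1, by have := k.isLt; omega⟩ : Fin n))).det
      = 1 + (-1) ^ n * C (RatFunc.C (I n * V n) / RatFunc.X) *
          ((charMat K n I V).submatrix
            (fun k : Fin (n - 2) => (⟨(k : ℕ) + 1, by have := k.isLt; omega⟩ : Fin n))
            (fun k : Fin (n - 2) => (⟨(k : ℕ) + 1, by have := k.isLt; omega⟩ : Fin n))).det := by
  obtain ⟨m, rfl⟩ : ∃ m, n = m + 3 := ⟨n - 3, by omega⟩
  exact aux16 m I V
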